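/- In the setting of the semi-discrete SW Vlasov system with closure by truncation, the particle number N(t) = Δx·α·Σ_{n=0}^{N_v-1} I_n·𝟙ᵀC_n(t) satisfies dN/dt = 0 when N_v is odd, and dN/dt = -Δx·(q/m)·√((N_v-1)/2)·I_{N_v-2}·E(t)ᵀ C_{N_v-1}(t) when N_v is even. -/

import Mathlib

open Matrix Finset

private lemma tele_aux (g : ℕ → ℝ) :
    ∀ k : ℕ, ∑ n ∈ Finset.range k, (g n - g (n + 2))
      = g 0 + g 1 - g k - g (k + 1) := by
  intro k
  induction k with
  | zero => simp
  | succ k ih => rw [Finset.sum_range_succ, ih]; ring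

theorem sw_particle_number_drift {N : ℕ} (Nv : ℕ) (hNv : 1 ≤ Nv)
    (D : Matrix (Fin N) (Fin N) ℝ) (hD : Dᵀ = -D)
    (hD1 : D.mulVec (fun _ => (1 : ℝ)) = 0)
    (Δx α u q m : ℝ) (hα : 0 < α) (hm : m ≠ 0)
    (I : ℕ → ℝ)
    (hI0 : I 0 = Real.sqrt 2 * Real.pi ^ ((1 : ℝ) / 4)) (hI1 : I 1 = 0)
    (hIrec : ∀ n : ℕ, 2 ≤ n → I n = Real.sqrt (((n : ℝ) - 1) / n) * I (n - 2))
    (C : ℕ → ℝ → Fin N → ℝ) (E : ℝ → Fin N → ℝ)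
    (hCtop : ∀ t, C Nv t = 0)
    (Q : ℕ → ℝ → Fin N → ℝ)
    (hQ : ∀ n t, Q n t = (α * Real.sqrt ((n : ℝ) / 2)) • C (n - 1) t
        + (α * Real.sqrt (((n : ℝ) + 1) / 2)) • C (n + 1) t + u • C n t)
    (hevol : ∀ n < Nv, ∀ t, HasDerivAt (C n)
        (-(D.mulVec (Q n t)) + (q / (m * α)) • (E t *
          (Real.sqrt ((n : ℝ) / 2) • C (n - 1) t
            - Real.sqrt (((n : ℝ) + 1) / 2) • C (n + 1) t))) t) :
    (Odd Nv → ∀ t, HasDerivAt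
      (fun t => Δx * α * ∑ n ∈ range Nv, I n * ((fun _ => (1 : ℝ)) ⬝ᵥ C n t)) 0 t) ∧
    (Even Nv → ∀ t, HasDerivAt
      (fun t => Δx * α * ∑ n ∈ range Nv, I n * ((fun _ => (1 : ℝ)) ⬝ᵥ C n t))
      (-(Δx * (q / m) * Real.sqrt (((Nv : ℝ) - 1) / 2) * I (Nv - 2) *
        (E t ⬝ᵥ C (Nv - 1) t))) t) := by
  have hα' : α ≠ 0 := ne_of_gt hα
  -- 1ᵀ D x = 0
  have hone : ∀ x : Fin N → ℝ, (fun _ => (1 : ℝ)) ⬝ᵥ D.mulVec x = 0 := by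
    intro x
    rw [Matrix.dotProduct_mulVec]
    have hvm : Matrix.vecMul (fun _ => (1 : ℝ)) D = 0 := by
      have h := Matrix.mulVec_transpose D (fun _ => (1 : ℝ))
      rw [hD, Matrix.neg_mulVec, hD1] at h
      simpa using h.symm
    rw [hvm]
    simp [dotProduct]
  -- per-t telescoped scalar function
  set g : ℝ → ℕ → ℝ := fun t n => I n * Real.sqrt ((n : ℝ) / 2) * (E t ⬝ᵥ C (n - 1) t)
    with hg
  -- key derivative computation
  have key : ∀ t, HasDerivAt
      (fun t => Δx * α * ∑ n ∈ range Nv, I n * ((fun _ => (1 : ℝ)) ⬝ᵥ C n t))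
      (Δx * α * ((q / (m * α)) * (-(g t Nv)))) t := by
    intro t
    -- derivative of each summand
    have hterm : ∀ n ∈ range Nv, HasDerivAt
        (fun t => I n * ((fun _ => (1 : ℝ)) ⬝ᵥ C n t))
        ((q / (m * α)) * (g t n - g t (n + 2))) t := by
      intro n hn
      rw [Finset.mem_range] at hn
      set V : Fin N → ℝ := -(D.mulVec (Q n t)) + (q / (m * α)) • (E t *
          (Real.sqrt ((n : ℝ) / 2) • C (n - 1) t
            - Real.sqrt (((n : ℝ) + 1) / 2) • C (n + 1) t)) with hV
      have hd : HasDerivAt (fun t => (fun _ => (1 : ℝ)) ⬝ᵥ C n t)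
          ((fun _ => (1 : ℝ)) ⬝ᵥ V) t := by
        have h1 : ∀ i, HasDerivAt (fun t => C n t i) (V i) t :=
          hasDerivAt_pi.mp (hevol n hn t)
        have h2 : HasDerivAt (fun t => ∑ i : Fin N, C n t i) (∑ i : Fin N, V i) t :=
          HasDerivAt.fun_sum (fun i _ => h1 i)
        simpa [dotProduct] using h2
      have hVdot : (fun _ => (1 : ℝ)) ⬝ᵥ V = (q / (m * α)) *
          (Real.sqrt ((n : ℝ) / 2) * (E t ⬝ᵥ C (n - 1) t)
            - Real.sqrt (((n : ℝ) + 1) / 2) * (E t ⬝ᵥ C (n + 1) t)) := by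
        have hw : (fun _ => (1 : ℝ)) ⬝ᵥ (E t *
            (Real.sqrt ((n : ℝ) / 2) • C (n - 1) t
              - Real.sqrt (((n : ℝ) + 1) / 2) • C (n + 1) t))
            = Real.sqrt ((n : ℝ) / 2) * (E t ⬝ᵥ C (n - 1) t)
              - Real.sqrt (((n : ℝ) + 1) / 2) * (E t ⬝ᵥ C (n + 1) t) := by
          simp only [dotProduct, Pi.mul_apply, Pi.sub_apply, Pi.smul_apply,
            smul_eq_mul, one_mul, mul_sub, Finset.sum_sub_distrib, Finset.mul_sum]
          congr 1 <;> (apply Finset.sum_congr rfl; intros; ring)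
        rw [hV]
        rw [dotProduct_add, dotProduct_neg, hone, dotProduct_smul, hw]
        simp
      -- relate to g: the second term telescopes two steps ahead
      have hstep : I n * Real.sqrt (((n : ℝ) + 1) / 2) = I (n + 2) * Real.sqrt (((n : ℝ) + 2) / 2) := by
        have h := hIrec (n + 2) (by omega)
        have h2 : ((n + 2 : ℕ) : ℝ) = (n : ℝ) + 2 := by push_cast; ring
        rw [h2] at h
        have h3 : (n + 2) - 2 = n := by omega
        rw [h3] at h
        have h4 : ((n : ℝ) + 2 - 1) = (n : ℝ) + 1 := by ring
        rw [h4] at h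
        rw [h]
        rw [mul_comm (Real.sqrt _) (I n), mul_assoc, ← Real.sqrt_mul (by positivity)]
        have : ((n : ℝ) + 1) / ((n : ℝ) + 2) * (((n : ℝ) + 2) / 2) = ((n : ℝ) + 1) / 2 := by
          have hn2 : ((n : ℝ) + 2) ≠ 0 := by positivity
          field_simp
        rw [this]
      have hgn2 : g t (n + 2) = I (n + 2) * Real.sqrt (((n : ℝ) + 2) / 2) * (E t ⬝ᵥ C (n + 1) t) := by
        have h1 : (n + 2) - 1 = n + 1 := by omega
        simp only [hg, h1]
        push_cast
        ring
      have hgn : g t n = I n * Real.sqrt ((n : ℝ) / 2) * (E t ⬝ᵥ C (n - 1) t) := by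
        simp only [hg]
      have := (hd.const_mul (I n))
      refine this.congr_deriv ?_
      rw [hVdot, hgn, hgn2, ← hstep]
      ring
    have hsum := HasDerivAt.fun_sum hterm
    have hmul := hsum.const_mul (Δx * α)
    refine hmul.congr_deriv ?_
    have htel : ∑ n ∈ range Nv, ((q / (m * α)) * (g t n - g t (n + 2)))
        = (q / (m * α)) * (g t 0 + g t 1 - g t Nv - g t (Nv + 1)) := by
      rw [← Finset.mul_sum, tele_aux]
    rw [htel]
    have hg0 : g t 0 = 0 := by simp [hg]
    have hg1 : g t 1 = 0 := by simp [hg, hI1]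
    have hgN1 : g t (Nv + 1) = 0 := by
      have : (Nv + 1) - 1 = Nv := by omega
      simp [hg, this, hCtop t, dotProduct_zero]
    rw [hg0, hg1, hgN1]
    ring
  constructor
  · -- odd case: I Nv = 0
    intro hodd t
    have hoddI : ∀ k : ℕ, I (2 * k + 1) = 0 := by
      intro k
      induction k with
      | zero => simpa using hI1
      | succ k ih =>
        have h := hIrec (2 * (k + 1) + 1) (by omega)
        have h3 : (2 * (k + 1) + 1) - 2 = 2 * k + 1 := by omega
        rw [h3, ih, mul_zero] at h
        exact h
    obtain ⟨k, hk⟩ := hodd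
    have hINv : I Nv = 0 := by
      have : Nv = 2 * k + 1 := by omega
      rw [this]; exact hoddI k
    have := key t
    convert this using 1
    simp [hg, hINv]
  · -- even case
    intro heven t
    have hNv2 : 2 ≤ Nv := by
      obtain ⟨k, hk⟩ := heven
      omega
    have hINv : I Nv * Real.sqrt ((Nv : ℝ) / 2)
        = Real.sqrt (((Nv : ℝ) - 1) / 2) * I (Nv - 2) := by
      have h := hIrec Nv hNv2
      have h1 : (1 : ℝ) ≤ (Nv : ℝ) := by exact_mod_cast hNv
      rw [h, mul_comm (Real.sqrt _) (I (Nv - 2)), mul_assoc,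
        ← Real.sqrt_mul (div_nonneg (by linarith) (by linarith))]
      have hNv0 : ((Nv : ℝ)) ≠ 0 := by
        have : (0 : ℝ) < (Nv : ℝ) := by exact_mod_cast Nat.lt_of_lt_of_le Nat.zero_lt_one hNv
        linarith
      have : ((Nv : ℝ) - 1) / (Nv : ℝ) * ((Nv : ℝ) / 2) = ((Nv : ℝ) - 1) / 2 := by
        field_simp
      rw [this]
      ring
    have := key t
    convert this using 1
    simp only [hg]
    rw [show I Nv * Real.sqrt ((Nv : ℝ) / 2) * (E t ⬝ᵥ C (Nv - 1) t)
        = (I Nv * Real.sqrt ((Nv : ℝ) / 2)) * (E t ⬝ᵥ C (Nv - 1) t) from by ring, hINv]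
    field_simp
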